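/- With h, H, h₀ as in the context, set (h₀²) t i j := ∑ₖ ⟪h₀ t i k, h₀ t k j⟫, E t := ∑_{r,s,a,b} ⟪h₀ t r a, h₀ t s b⟫·⟪h₀ t r s, h₀ t a b⟫ (the fully cyclic quartic contraction Tr(h₀⁴)), and F t r s := 4·∑_{a,b} ⟪h₀ t r a, h₀ t s b⟫·(h₀ t a b) − (if r = s then ∑_{i,j} ((h₀²) t i j)·(h₀ t i j) else 0). Then for every t: ∑_{r,s} ⟪h₀ t r s, (d/dt)(F t r s)⟫ = 3·(d/dt)(E t), where d/dt denotes the derivative in t. -/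

import Mathlib

open scoped RealInnerProductSpace

lemma sum4_swap_outer_inner {M : Type*} [AddCommMonoid M] (g : Fin 4 → Fin 4 → Fin 4 → Fin 4 → M) :
    (∑ r : Fin 4, ∑ s : Fin 4, ∑ a : Fin 4, ∑ b : Fin 4, g r s a b)
      = ∑ r : Fin 4, ∑ s : Fin 4, ∑ a : Fin 4, ∑ b : Fin 4, g s r b a := by
  rw [Finset.sum_comm]
  exact Finset.sum_congr rfl fun r _ => Finset.sum_congr rfl fun s _ => Finset.sum_comm

lemma sum4_swap_mid {M : Type*} [AddCommMonoid M] (g : Fin 4 → Fin 4 → Fin 4 → Fin 4 → M) :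
    (∑ r : Fin 4, ∑ s : Fin 4, ∑ a : Fin 4, ∑ b : Fin 4, g r s a b)
      = ∑ r : Fin 4, ∑ s : Fin 4, ∑ a : Fin 4, ∑ b : Fin 4, g r a s b :=
  Finset.sum_congr rfl fun _ _ => Finset.sum_comm

lemma sum4_swap_halves {M : Type*} [AddCommMonoid M] (g : Fin 4 → Fin 4 → Fin 4 → Fin 4 → M) :
    (∑ r : Fin 4, ∑ s : Fin 4, ∑ a : Fin 4, ∑ b : Fin 4, g r s a b)
      = ∑ r : Fin 4, ∑ s : Fin 4, ∑ a : Fin 4, ∑ b : Fin 4, g a b r s := by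
  calc (∑ r : Fin 4, ∑ s : Fin 4, ∑ a : Fin 4, ∑ b : Fin 4, g r s a b)
      = ∑ r : Fin 4, ∑ a : Fin 4, ∑ s : Fin 4, ∑ b : Fin 4, g r s a b :=
        Finset.sum_congr rfl fun _ _ => Finset.sum_comm
    _ = ∑ a : Fin 4, ∑ r : Fin 4, ∑ s : Fin 4, ∑ b : Fin 4, g r s a b := Finset.sum_comm
    _ = ∑ a : Fin 4, ∑ r : Fin 4, ∑ b : Fin 4, ∑ s : Fin 4, g r s a b :=
        Finset.sum_congr rfl fun _ _ => Finset.sum_congr rfl fun _ _ => Finset.sum_comm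
    _ = ∑ a : Fin 4, ∑ b : Fin 4, ∑ r : Fin 4, ∑ s : Fin 4, g r s a b :=
        Finset.sum_congr rfl fun _ _ => Finset.sum_comm

theorem stmt_18 {V : Type*} [NormedAddCommGroup V] [InnerProductSpace ℝ V]
    (h : ℝ → Fin 4 → Fin 4 → V)
    (hdiff : ∀ i j, Differentiable ℝ (fun t => h t i j))
    (hsymm : ∀ t i j, h t i j = h t j i)
    (H : ℝ → V) (hH : ∀ t, H t = (1 / 4 : ℝ) • ∑ i : Fin 4, h t i i)
    (h₀ : ℝ → Fin 4 → Fin 4 → V)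
    (hh₀ : ∀ t i j, h₀ t i j = h t i j - if i = j then H t else 0)
    (h₀2 : ℝ → Fin 4 → Fin 4 → ℝ)
    (hh₀2 : ∀ t i j, h₀2 t i j = ∑ k : Fin 4, ⟪h₀ t i k, h₀ t k j⟫)
    (E : ℝ → ℝ)
    (hE : ∀ t, E t = ∑ r : Fin 4, ∑ s : Fin 4, ∑ a : Fin 4, ∑ b : Fin 4,
      ⟪h₀ t r a, h₀ t s b⟫ * ⟪h₀ t r s, h₀ t a b⟫)
    (F : ℝ → Fin 4 → Fin 4 → V)
    (hF : ∀ t r s, F t r s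
      = (4 : ℝ) • (∑ a : Fin 4, ∑ b : Fin 4, ⟪h₀ t r a, h₀ t s b⟫ • h₀ t a b)
        - (if r = s then ∑ i : Fin 4, ∑ j : Fin 4, h₀2 t i j • h₀ t i j else 0)) :
    ∀ t, ∑ r : Fin 4, ∑ s : Fin 4, ⟪h₀ t r s, deriv (fun u => F u r s) t⟫
      = 3 * deriv E t := by
  -- differentiability of H and h₀
  have hHd : Differentiable ℝ H := by
    have hHe : H = fun u => (1 / 4 : ℝ) • ∑ i : Fin 4, h u i i := funext hH
    rw [hHe]
    exact (Differentiable.fun_sum fun i _ => hdiff i i).const_smul _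
  have hd₀ : ∀ i j, Differentiable ℝ (fun u => h₀ u i j) := by
    intro i j
    have he : (fun u => h₀ u i j) = fun u => h u i j - (if i = j then H u else 0) :=
      funext fun u => hh₀ u i j
    rw [he]
    refine (hdiff i j).sub ?_
    split
    · exact hHd
    · exact differentiable_const 0
  -- symmetry of h₀
  have hx : ∀ u i j, h₀ u i j = h₀ u j i := by
    intro u i j
    rw [hh₀, hh₀, hsymm]
    congr 1
    exact if_congr eq_comm rfl rfl
  -- tracelessness
  have htr : ∀ u, ∑ i : Fin 4, h₀ u i i = 0 := by
    intro u
    have h4 : ∑ _i : Fin 4, H u = ∑ i : Fin 4, h u i i := by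
      rw [Finset.sum_const, Finset.card_univ, Fintype.card_fin, hH,
        ← Nat.cast_smul_eq_nsmul ℝ, smul_smul]
      norm_num
    calc ∑ i : Fin 4, h₀ u i i = ∑ i : Fin 4, (h u i i - H u) := by simp [hh₀]
      _ = (∑ i : Fin 4, h u i i) - ∑ _i : Fin 4, H u := Finset.sum_sub_distrib _ _
      _ = 0 := by rw [h4, sub_self]
  intro t
  -- derivative of h₀
  set y : Fin 4 → Fin 4 → V := fun i j => deriv (fun u => h₀ u i j) t with hy_def
  have hy : ∀ i j, HasDerivAt (fun u => h₀ u i j) (y i j) t := fun i j =>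
    (hd₀ i j t).hasDerivAt
  -- derivative of E
  have hE' : HasDerivAt E (∑ r : Fin 4, ∑ s : Fin 4, ∑ a : Fin 4, ∑ b : Fin 4,
      ((⟪h₀ t r a, y s b⟫ + ⟪y r a, h₀ t s b⟫) * ⟪h₀ t r s, h₀ t a b⟫
        + ⟪h₀ t r a, h₀ t s b⟫ * (⟪h₀ t r s, y a b⟫ + ⟪y r s, h₀ t a b⟫))) t := by
    have hEe : E = fun u => ∑ r : Fin 4, ∑ s : Fin 4, ∑ a : Fin 4, ∑ b : Fin 4,
        ⟪h₀ u r a, h₀ u s b⟫ * ⟪h₀ u r s, h₀ u a b⟫ := funext hE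
    rw [hEe]
    refine HasDerivAt.fun_sum fun r _ => HasDerivAt.fun_sum fun s _ => HasDerivAt.fun_sum fun a _ =>
      HasDerivAt.fun_sum fun b _ => ?_
    exact ((hy r a).inner ℝ (hy s b)).mul ((hy r s).inner ℝ (hy a b))
  -- the scalar field S and its derivative
  set S : ℝ → V := fun u => ∑ i : Fin 4, ∑ j : Fin 4, h₀2 u i j • h₀ u i j with hS_def
  have hSd : Differentiable ℝ S := by
    have hSe : S = fun u => ∑ i : Fin 4, ∑ j : Fin 4,
        (∑ k : Fin 4, ⟪h₀ u i k, h₀ u k j⟫) • h₀ u i j := by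
      funext u; simp only [hS_def, hh₀2]
    rw [hSe]
    refine Differentiable.fun_sum fun i _ => Differentiable.fun_sum fun j _ => ?_
    exact (Differentiable.fun_sum fun k _ => (hd₀ i k).inner ℝ (hd₀ k j)).smul (hd₀ i j)
  set DS : V := deriv S t with hDS_def
  -- derivative of F
  have hF' : ∀ r s, HasDerivAt (fun u => F u r s)
      ((4 : ℝ) • (∑ a : Fin 4, ∑ b : Fin 4,
        (⟪h₀ t r a, h₀ t s b⟫ • y a b
          + (⟪h₀ t r a, y s b⟫ + ⟪y r a, h₀ t s b⟫) • h₀ t a b))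
        - (if r = s then DS else 0)) t := by
    intro r s
    have hFe : (fun u => F u r s) = fun u =>
        (4 : ℝ) • (∑ a : Fin 4, ∑ b : Fin 4, ⟪h₀ u r a, h₀ u s b⟫ • h₀ u a b)
          - (if r = s then S u else 0) := funext fun u => hF u r s
    rw [hFe]
    refine HasDerivAt.sub ?_ ?_
    · exact (HasDerivAt.fun_sum fun a _ => HasDerivAt.fun_sum fun b _ =>
        ((hy r a).inner ℝ (hy s b)).smul (hy a b)).const_smul (4 : ℝ)
    · by_cases hrs : r = s
      · simp only [if_pos hrs]
        exact (hSd t).hasDerivAt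
      · simp only [if_neg hrs]
        exact hasDerivAt_const t 0
  -- abbreviations for the four quartic sums
  set S1 : ℝ := ∑ r : Fin 4, ∑ s : Fin 4, ∑ a : Fin 4, ∑ b : Fin 4,
    ⟪y r a, h₀ t s b⟫ * ⟪h₀ t r s, h₀ t a b⟫ with hS1
  set S2 : ℝ := ∑ r : Fin 4, ∑ s : Fin 4, ∑ a : Fin 4, ∑ b : Fin 4,
    ⟪h₀ t r a, y s b⟫ * ⟪h₀ t r s, h₀ t a b⟫ with hS2
  set S3 : ℝ := ∑ r : Fin 4, ∑ s : Fin 4, ∑ a : Fin 4, ∑ b : Fin 4,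
    ⟪h₀ t r a, h₀ t s b⟫ * ⟪y r s, h₀ t a b⟫ with hS3
  set S4 : ℝ := ∑ r : Fin 4, ∑ s : Fin 4, ∑ a : Fin 4, ∑ b : Fin 4,
    ⟪h₀ t r a, h₀ t s b⟫ * ⟪h₀ t r s, y a b⟫ with hS4
  -- the four sums coincide
  have e21 : S2 = S1 := by
    rw [hS2, sum4_swap_outer_inner (fun r s a b => ⟪h₀ t r a, y s b⟫ * ⟪h₀ t r s, h₀ t a b⟫)]
    rw [hS1]
    refine Finset.sum_congr rfl fun r _ => Finset.sum_congr rfl fun s _ =>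
      Finset.sum_congr rfl fun a _ => Finset.sum_congr rfl fun b _ => ?_
    rw [real_inner_comm (h₀ t s b) (y r a), hx t s r, hx t b a]
  have e31 : S3 = S1 := by
    rw [hS3, sum4_swap_mid (fun r s a b => ⟪h₀ t r a, h₀ t s b⟫ * ⟪y r s, h₀ t a b⟫)]
    rw [hS1]
    refine Finset.sum_congr rfl fun r _ => Finset.sum_congr rfl fun s _ =>
      Finset.sum_congr rfl fun a _ => Finset.sum_congr rfl fun b _ => ?_
    rw [mul_comm]
  have e43 : S4 = S3 := by
    rw [hS4, sum4_swap_halves (fun r s a b => ⟪h₀ t r a, h₀ t s b⟫ * ⟪h₀ t r s, y a b⟫)]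
    rw [hS3]
    refine Finset.sum_congr rfl fun r _ => Finset.sum_congr rfl fun s _ =>
      Finset.sum_congr rfl fun a _ => Finset.sum_congr rfl fun b _ => ?_
    rw [real_inner_comm (h₀ t a b) (y r s), hx t a r, hx t b s]
  -- compute RHS
  have hR : deriv E t = S2 + S1 + (S4 + S3) := by
    rw [hE'.deriv, hS1, hS2, hS3, hS4]
    simp only [add_mul, mul_add, Finset.sum_add_distrib]
  -- compute LHS
  have hL : ∑ r : Fin 4, ∑ s : Fin 4, ⟪h₀ t r s, deriv (fun u => F u r s) t⟫
      = 4 * (S4 + (S2 + S1)) := by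
    have hcore : ∀ r s : Fin 4,
        ⟪h₀ t r s, deriv (fun u => F u r s) t⟫
          = 4 * (∑ a : Fin 4, ∑ b : Fin 4,
              (⟪h₀ t r a, h₀ t s b⟫ * ⟪h₀ t r s, y a b⟫
                + (⟪h₀ t r a, y s b⟫ * ⟪h₀ t r s, h₀ t a b⟫
                  + ⟪y r a, h₀ t s b⟫ * ⟪h₀ t r s, h₀ t a b⟫)))
            - (if r = s then ⟪h₀ t r s, DS⟫ else 0) := by
      intro r s
      rw [(hF' r s).deriv]
      rw [inner_sub_right]
      congr 1
      · rw [real_inner_smul_right, inner_sum]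
        congr 1
        refine Finset.sum_congr rfl fun a _ => ?_
        rw [inner_sum]
        refine Finset.sum_congr rfl fun b _ => ?_
        rw [inner_add_right, real_inner_smul_right, real_inner_smul_right, add_mul]
      · split <;> simp
    simp only [hcore, Finset.sum_sub_distrib]
    have hzero : (∑ r : Fin 4, ∑ s : Fin 4, (if r = s then (⟪h₀ t r s, DS⟫ : ℝ) else 0)) = 0 := by
      have h1 : ∀ r : Fin 4,
          (∑ s : Fin 4, (if r = s then (⟪h₀ t r s, DS⟫ : ℝ) else 0)) = ⟪h₀ t r r, DS⟫ := by
        intro r; simp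
      rw [Finset.sum_congr rfl fun r _ => h1 r, ← sum_inner, htr t, inner_zero_left]
    rw [hzero, sub_zero]
    simp only [← Finset.mul_sum, Finset.sum_add_distrib]
    rfl
  rw [hL, hR, e21, e31, e43, e31]
  ring
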